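/- The function Φ(λ) = λ/√(λ+r), for fixed r ≥ 0, is a Bernstein function on (0,∞): Φ ≥ 0, Φ' ≥ 0, and (−1)^{n−1} Φ^{(n)}(λ) ≥ 0 for all n ≥ 1 and λ > 0. In particular Φ'' ≤ 0 on (0,∞). -/

import Mathlib

open Real Set

noncomputable def cB : ℕ → ℝ
  | 0 => 1
  | n + 1 => cB n * (1/2 - n)

noncomputable def dB : ℕ → ℝ
  | 0 => 1
  | n + 1 => dB n * (-(1/2) - n)

lemma iD_formula (r : ℝ) (n : ℕ) :
    ∀ x : ℝ, 0 < x + r →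
      iteratedDeriv n (fun x => x / Real.sqrt (x + r)) x
        = cB n * (x + r) ^ ((1:ℝ)/2 - n) - r * dB n * (x + r) ^ (-(1:ℝ)/2 - n) := by
  induction n with
  | zero =>
    intro x hx
    have hs : (0:ℝ) < Real.sqrt (x + r) := Real.sqrt_pos.2 hx
    have hsq : Real.sqrt (x + r) * Real.sqrt (x + r) = x + r := Real.mul_self_sqrt hx.le
    simp only [iteratedDeriv_zero, cB, dB, Nat.cast_zero, sub_zero, one_mul]
    rw [show (-1:ℝ)/2 = -((1:ℝ)/2) by ring, Real.rpow_neg hx.le, ← Real.sqrt_eq_rpow]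
    field_simp
    rw [Real.sq_sqrt hx.le]; ring
  | succ n ih =>
    intro x hx
    have hopen : IsOpen {y : ℝ | 0 < y + r} :=
      isOpen_lt continuous_const (continuous_id.add continuous_const)
    have hev : iteratedDeriv n (fun x => x / Real.sqrt (x + r)) =ᶠ[nhds x]
        fun y => cB n * (y + r) ^ ((1:ℝ)/2 - n) - r * dB n * (y + r) ^ (-(1:ℝ)/2 - n) :=
      Filter.eventuallyEq_of_mem (hopen.mem_nhds hx) (fun y hy => ih y hy)
    rw [iteratedDeriv_succ, hev.deriv_eq]
    have h1 : HasDerivAt (fun y : ℝ => y + r) 1 x := (hasDerivAt_id x).add_const r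
    have h2 := h1.rpow_const (p := (1:ℝ)/2 - n) (Or.inl hx.ne')
    have h3 := h1.rpow_const (p := -(1:ℝ)/2 - n) (Or.inl hx.ne')
    have h := (h2.const_mul (cB n)).sub (h3.const_mul (r * dB n))
    rw [HasDerivAt.deriv (f := fun y => cB n * (y + r) ^ ((1:ℝ)/2 - n) - r * dB n * (y + r) ^ (-(1:ℝ)/2 - n)) h]
    have e1 : (1:ℝ)/2 - (n:ℝ) - 1 = (1:ℝ)/2 - ((n+1 : ℕ):ℝ) := by push_cast; ring
    have e2 : -(1:ℝ)/2 - (n:ℝ) - 1 = -(1:ℝ)/2 - ((n+1 : ℕ):ℝ) := by push_cast; ring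
    rw [e1, e2]
    simp only [cB, dB]
    push_cast
    ring

lemma sign_cd : ∀ n : ℕ, 1 ≤ n →
    0 ≤ (-1:ℝ)^(n-1) * cB n ∧ (-1:ℝ)^(n-1) * dB n ≤ 0 := by
  intro n hn
  induction n, hn using Nat.le_induction with
  | base => norm_num [cB, dB]
  | succ n hn ih =>
    obtain ⟨hc, hd⟩ := ih
    have hpow : (-1:ℝ)^(n+1-1) = (-1:ℝ)^(n-1) * (-1) := by
      rw [show n + 1 - 1 = (n-1) + 1 by omega, pow_succ]
    have hn' : (1:ℝ) ≤ (n:ℝ) := by exact_mod_cast hn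
    constructor
    · simp only [cB, hpow]
      nlinarith
    · simp only [dB, hpow]
      nlinarith

theorem Phi_is_Bernstein (r : ℝ) (hr : 0 ≤ r) :
    (∀ l > (0:ℝ), 0 ≤ l / Real.sqrt (l + r)) ∧
    (∀ l > (0:ℝ), 0 ≤ deriv (fun x => x / Real.sqrt (x + r)) l) ∧
    (∀ n : ℕ, 1 ≤ n → ∀ l > (0:ℝ),
      0 ≤ (-1 : ℝ) ^ (n - 1) * iteratedDeriv n (fun x => x / Real.sqrt (x + r)) l) ∧
    (∀ l > (0:ℝ), iteratedDeriv 2 (fun x => x / Real.sqrt (x + r)) l ≤ 0) := by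
  have key : ∀ n : ℕ, 1 ≤ n → ∀ l > (0:ℝ),
      0 ≤ (-1 : ℝ) ^ (n - 1) * iteratedDeriv n (fun x => x / Real.sqrt (x + r)) l := by
    intro n hn l hl
    have hx : 0 < l + r := by linarith
    rw [iD_formula r n l hx]
    obtain ⟨hc, hd⟩ := sign_cd n hn
    have hA : (0:ℝ) < (l + r) ^ ((1:ℝ)/2 - n) := Real.rpow_pos_of_pos hx _
    have hB : (0:ℝ) < (l + r) ^ (-(1:ℝ)/2 - n) := Real.rpow_pos_of_pos hx _
    nlinarith [mul_nonneg hc hA.le, mul_nonneg (mul_nonneg hr (neg_nonneg.2 hd)) hB.le]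
  refine ⟨?_, ?_, key, ?_⟩
  · intro l hl
    exact div_nonneg hl.le (Real.sqrt_nonneg _)
  · intro l hl
    have := key 1 le_rfl l hl
    simpa [iteratedDeriv_one] using this
  · intro l hl
    have := key 2 (by norm_num) l hl
    simpa using this
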